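/- Let OCE(v) := inf_{ξ∈ℝ} {ξ + E[ℓ(v − ξ)]} for a loss function ℓ with slopes in [ε₁, L₁], ε₁ > 0, ℓ(0)=0, on a finite probability space. Then for all v ≥ w pointwise, OCE(v) − OCE(w) ≥ ε₁·E[v − w]. -/

import Mathlib

open Finset

theorem stmt_13 {Ω : Type*} [Fintype Ω] [Nonempty Ω]
    (P : Ω → ℝ) (hP0 : ∀ ω, 0 ≤ P ω) (hP1 : ∑ ω, P ω = 1)
    (ℓ : ℝ → ℝ) (hℓ0 : ℓ 0 = 0) (hmono : Monotone ℓ)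
    (ε₁ L₁ : ℝ) (hε : 0 < ε₁)
    (hslope : ∀ x y : ℝ, x ≠ y → ε₁ ≤ (ℓ x - ℓ y) / (x - y) ∧ (ℓ x - ℓ y) / (x - y) ≤ L₁)
    (OCE : (Ω → ℝ) → ℝ)
    -- OCE u is the infimum of ξ ↦ ξ + E[ℓ(u − ξ)]
    (hOCE : ∀ u : Ω → ℝ,
      IsGLB (Set.range fun ξ : ℝ => ξ + ∑ ω, P ω * ℓ (u ω - ξ)) (OCE u))
    -- the infimum is attained
    (hatt : ∀ u : Ω → ℝ, ∃ ξ : ℝ, OCE u = ξ + ∑ ω, P ω * ℓ (u ω - ξ))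
    (v w : Ω → ℝ) (hvw : ∀ ω, w ω ≤ v ω) :
    ε₁ * ∑ ω, P ω * (v ω - w ω) ≤ OCE v - OCE w := by
  obtain ⟨ξ, hξ⟩ := hatt v
  have hw : OCE w ≤ ξ + ∑ ω, P ω * ℓ (w ω - ξ) :=
    (hOCE w).1 ⟨ξ, rfl⟩
  have key : ∀ ω, ε₁ * (P ω * (v ω - w ω)) ≤ P ω * ℓ (v ω - ξ) - P ω * ℓ (w ω - ξ) := by
    intro ω
    rcases eq_or_lt_of_le (hvw ω) with h | h
    · simp [h]
    · have hne : (v ω - ξ) ≠ (w ω - ξ) := by intro hc; nlinarith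
      have hs := (hslope _ _ hne).1
      have hd : (0:ℝ) < (v ω - ξ) - (w ω - ξ) := by linarith
      have : ε₁ * ((v ω - ξ) - (w ω - ξ)) ≤ ℓ (v ω - ξ) - ℓ (w ω - ξ) := by
        rw [le_div_iff₀ hd] at hs
        linarith
      have hε' : ε₁ * (v ω - w ω) ≤ ℓ (v ω - ξ) - ℓ (w ω - ξ) := by
        simpa using this
      have hP := hP0 ω
      nlinarith
  calc ε₁ * ∑ ω, P ω * (v ω - w ω) = ∑ ω, ε₁ * (P ω * (v ω - w ω)) := by rw [Finset.mul_sum]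
    _ ≤ ∑ ω, (P ω * ℓ (v ω - ξ) - P ω * ℓ (w ω - ξ)) := Finset.sum_le_sum fun ω _ => key ω
    _ = (∑ ω, P ω * ℓ (v ω - ξ)) - ∑ ω, P ω * ℓ (w ω - ξ) := Finset.sum_sub_distrib _ _
    _ ≤ OCE v - OCE w := by rw [hξ]; linarith
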